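/- Let n be a positive integer and write n = m·r² where m is squarefree (m is the squarefree part of n and r² is the largest square dividing n). Then f(n) = m·(r+1)². -/
import Mathlib


/-- `f n` is the least integer `k > n` such that `n * k` is a perfect square. -/
noncomputable def f (n : ℕ) : ℕ := sInf {k | n < k ∧ IsSquare (n * k)}

theorem f_eq (n m r : ℕ) (hn : 0 < n) (hnmr : n = m * r ^ 2) (hm : Squarefree m) :
    f n = m * (r + 1) ^ 2 := by
  subst hnmr
  have hm0 : 0 < m := Nat.pos_of_mul_pos_left (by rwa [mul_comm] at hn)
  have hr0 : 0 < r := by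
    rcases Nat.eq_zero_or_pos r with h | h
    · simp [h] at hn
    · exact h
  have hmem : m * (r + 1) ^ 2 ∈ {k | m * r ^ 2 < k ∧ IsSquare (m * r ^ 2 * k)} := by
    constructor
    · have : r ^ 2 < (r + 1) ^ 2 := by nlinarith
      exact (Nat.mul_lt_mul_left hm0).mpr this
    · exact ⟨m * r * (r + 1), by ring⟩
  have key : ∀ k ∈ {k | m * r ^ 2 < k ∧ IsSquare (m * r ^ 2 * k)},
      m * (r + 1) ^ 2 ≤ k := by
    rintro k ⟨hk, c, hc⟩
    have hrc : r ∣ c := by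
      have h2 : r ^ 2 ∣ c ^ 2 := ⟨m * k, by rw [sq, ← hc]; ring⟩
      exact (Nat.pow_dvd_pow_iff two_ne_zero).mp h2
    obtain ⟨d, rfl⟩ := hrc
    have hmk : m * k = d * d := by
      have h1 : r ^ 2 * (m * k) = r ^ 2 * (d * d) := by nlinarith [hc]
      exact Nat.eq_of_mul_eq_mul_left (by positivity) h1
    have hmd : m ∣ d := by
      refine (hm.dvd_pow_iff_dvd two_ne_zero).mp ?_
      exact ⟨k, by rw [sq, ← hmk]⟩
    obtain ⟨t, rfl⟩ := hmd
    have hkt : k = m * t ^ 2 := by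
      have h1 : m * k = m * (m * t ^ 2) := by rw [hmk]; ring
      exact Nat.eq_of_mul_eq_mul_left hm0 h1
    subst hkt
    have : r ^ 2 < t ^ 2 := lt_of_mul_lt_mul_left hk (Nat.zero_le m)
    have : r + 1 ≤ t := Nat.pow_lt_pow_iff_left (n := 2) two_ne_zero |>.mp this
    exact Nat.mul_le_mul_left m (Nat.pow_le_pow_left this 2)
  exact le_antisymm (Nat.sInf_le hmem) (le_csInf ⟨_, hmem⟩ key)
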